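/- For all natural numbers a, b, d, m, p, we have ∑_{k=0}^{a} C(a,k)·C(b,m+k)·C(p+k, a+b−d)·C(m+k,d) = C(d+p−m, b−m)·C(p, m+a−d)·C(b,d). -/

import Mathlib

/-- Binomial coefficient for integers: `C x y` is the usual binomial coefficient
when `0 ≤ y ≤ x`, and `0` otherwise. -/
def C (x y : ℤ) : ℤ := if 0 ≤ y ∧ y ≤ x then (x.toNat.choose y.toNat : ℤ) else 0


lemma C_neg {x y : ℤ} (h : y < 0) : C x y = 0 := by
  simp [C, not_le.mpr h]

lemma C_gt {x y : ℤ} (h : x < y) : C x y = 0 := by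
  simp only [C, ite_eq_right_iff]
  rintro ⟨-, h2⟩; omega

lemma C_nat (n k : ℕ) : C n k = n.choose k := by
  unfold C
  split
  · simp
  · next h =>
    push_neg at h
    have : n < k := by exact_mod_cast h (by positivity)
    simp [Nat.choose_eq_zero_of_lt this]

lemma C_pascal (n : ℕ) (y : ℤ) : C ((n : ℤ) + 1) y = C n y + C n (y - 1) := by
  rcases lt_or_ge y 0 with h | h
  · rw [C_neg h, C_neg h, C_neg (by omega)]; ring
  · obtain ⟨k, rfl⟩ := Int.eq_ofNat_of_zero_le h
    cases k with
    | zero =>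
      rw [show ((n:ℤ)+1) = ((n+1:ℕ):ℤ) by push_cast; ring,
        show ((0:ℕ):ℤ) = ((0:ℕ):ℤ) from rfl, C_nat, C_nat,
        C_neg (show ((0:ℕ):ℤ) - 1 < 0 by norm_num)]
      simp
    | succ k =>
      have h1 : ((n:ℤ)+1) = ((n+1:ℕ):ℤ) := by push_cast; ring
      have h2 : ((k+1:ℕ):ℤ) - 1 = (k:ℤ) := by push_cast; ring
      rw [h1, h2, C_nat, C_nat, C_nat, Nat.choose_succ_succ']
      push_cast; ring

lemma C_trinomial (x y z : ℤ) : C x y * C y z = C x z * C (x - z) (y - z) := by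
  rcases lt_or_ge z 0 with hz | hz
  · rw [C_neg hz, C_neg hz]; ring
  rcases lt_or_ge y z with hyz | hyz
  · rw [C_gt hyz, C_neg (show y - z < 0 by omega)]; ring
  rcases lt_or_ge x y with hxy | hxy
  · rw [C_gt hxy, C_gt (show x - z < y - z by omega)]; ring
  -- now 0 ≤ z ≤ y ≤ x
  obtain ⟨c, rfl⟩ := Int.eq_ofNat_of_zero_le hz
  obtain ⟨k, rfl⟩ := Int.eq_ofNat_of_zero_le (show (0:ℤ) ≤ y by omega)
  obtain ⟨n, rfl⟩ := Int.eq_ofNat_of_zero_le (show (0:ℤ) ≤ x by omega)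
  have hck : c ≤ k := by exact_mod_cast hyz
  have hkn : k ≤ n := by exact_mod_cast hxy
  rw [C_nat, C_nat, C_nat,
    show ((n:ℤ) - c) = ((n - c : ℕ) : ℤ) by omega,
    show ((k:ℤ) - c) = ((k - c : ℕ) : ℤ) by omega, C_nat]
  exact_mod_cast congrArg (Nat.cast : ℕ → ℤ) (Nat.choose_mul (n := n) hck)

lemma C_vandermonde (n m : ℕ) (t : ℤ) :
    ∑ j ∈ Finset.range (n + 1), C n j * C m (t - j) = C (n + m : ℕ) t := by
  induction n generalizing t with
  | zero =>
    have h00 : C 0 0 = 1 := by simpa using C_nat 0 0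
    simp [h00]
  | succ n ih =>
    have key : ∀ j : ℕ, C (n+1 : ℕ) (j : ℤ) = C n j + C n ((j : ℤ) - 1) := by
      intro j
      rw [show ((n+1:ℕ):ℤ) = (n:ℤ)+1 by push_cast; ring, C_pascal]
    calc ∑ j ∈ Finset.range (n + 2), C (n+1:ℕ) (j:ℤ) * C m (t - j)
        = (∑ j ∈ Finset.range (n + 2), C n j * C m (t - j))
          + ∑ j ∈ Finset.range (n + 2), C n ((j:ℤ) - 1) * C m (t - j) := by
          rw [← Finset.sum_add_distrib]
          exact Finset.sum_congr rfl fun j _ => by rw [key]; ring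
      _ = C (n + m : ℕ) t + C (n + m : ℕ) (t - 1) := by
          congr 1
          · rw [Finset.sum_range_succ, C_gt (by exact_mod_cast Nat.lt_succ_self n), ← ih t]
            ring
          · rw [Finset.sum_range_succ']
            rw [show C (n:ℤ) (((0:ℕ):ℤ) - 1) * C m (t - (0:ℕ)) = 0 by
              rw [C_neg (by norm_num)]; ring, add_zero, ← ih (t-1)]
            exact Finset.sum_congr rfl fun j _ => by
              push_cast; ring_nf
      _ = C (n + 1 + m : ℕ) t := by
          rw [show ((n+1+m:ℕ):ℤ) = ((n+m:ℕ):ℤ) + 1 by push_cast; ring, C_pascal]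

lemma C_symm (n j : ℕ) (h : j ≤ n) : C n ((n - j : ℕ) : ℤ) = C n j := by
  rw [C_nat, C_nat, Nat.choose_symm h]

lemma C_vandermonde' (n m N : ℕ) (h : n ≤ N) (t : ℤ) :
    ∑ j ∈ Finset.range (N + 1), C n j * C m (t - j) = C ((n + m : ℕ)) t := by
  rw [← C_vandermonde n m t]
  exact (Finset.sum_subset (Finset.range_subset_range.mpr (by omega)) (fun j hj hj' => by
    have hnj : (n : ℤ) < j := by
      simp only [Finset.mem_range] at hj hj'
      exact_mod_cast (by omega : n < j)
    rw [C_gt hnj, zero_mul])).symm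

lemma C_vand_add (n m : ℕ) (t : ℤ) :
    ∑ i ∈ Finset.range (n + 1), C n i * C m (t + i) = C ((n + m : ℕ)) (t + n) := by
  rw [← Finset.sum_range_reflect (fun i => C n i * C m (t + i)) (n + 1),
    ← C_vandermonde n m (t + (n : ℤ))]
  apply Finset.sum_congr rfl
  intro i hi
  have hi' : i ≤ n := Finset.mem_range_succ_iff.mp hi
  have e1 : n + 1 - 1 - i = n - i := by omega
  simp only [e1]
  rw [C_symm n i hi', show t + ((n - i : ℕ) : ℤ) = t + n - i by omega]

lemma C_shift (u m j N : ℕ) (hN : j + u = N) (t : ℤ) :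
    ∑ k ∈ Finset.range (N + 1), C u ((k : ℤ) - j) * C m (t + k)
      = C ((u + m : ℕ)) (t + j + u) := by
  subst hN
  rw [Finset.range_eq_Ico,
    ← Finset.sum_Ico_consecutive _ (Nat.zero_le j) (by omega : j ≤ j + u + 1)]
  have h1 : ∑ k ∈ Finset.Ico 0 j, C u ((k : ℤ) - j) * C m (t + k) = 0 :=
    Finset.sum_eq_zero fun k hk => by
      have hkj : k < j := (Finset.mem_Ico.mp hk).2
      rw [C_neg (by omega : (k : ℤ) - j < 0), zero_mul]
  rw [h1, zero_add, Finset.sum_Ico_eq_sum_range]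
  have h2 : j + u + 1 - j = u + 1 := by omega
  rw [h2]
  calc ∑ i ∈ Finset.range (u + 1), C u (((j + i : ℕ) : ℤ) - j) * C m (t + ((j + i : ℕ) : ℤ))
      = ∑ i ∈ Finset.range (u + 1), C u i * C m ((t + j) + i) := by
        apply Finset.sum_congr rfl
        intro i _
        rw [show ((j + i : ℕ) : ℤ) - j = (i : ℤ) by push_cast; ring,
          show t + ((j + i : ℕ) : ℤ) = t + j + i by push_cast; ring]
    _ = C ((u + m : ℕ)) (t + j + u) := C_vand_add u m (t + (j : ℤ))

theorem stmt_12 (a b d m p : ℕ) :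
    ∑ k ∈ Finset.range (a + 1), C a k * C b ((m : ℤ) + k) * C ((p : ℤ) + k) ((a : ℤ) + b - d) * C ((m : ℤ) + k) d = C ((d : ℤ) + p - m) ((b : ℤ) - m) * C p ((m : ℤ) + a - d) * C b d := by
  by_cases hbd : d ≤ b
  · -- main case
    set s : ℤ := (m : ℤ) + a - d with hs
    set δ : ℤ := (a : ℤ) + b - d with hδ
    set b' : ℕ := b - d with hb'def
    have hb' : (b : ℤ) - d = (b' : ℤ) := by omega
    -- Step 1: trinomial + Vandermonde expansion per k, then swap sums
    have step1 : ∑ k ∈ Finset.range (a + 1),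
        C a k * C b ((m : ℤ) + k) * C ((p : ℤ) + k) δ * C ((m : ℤ) + k) d
        = C (b : ℤ) d * ∑ j ∈ Finset.range (a + 1), ∑ k ∈ Finset.range (a + 1),
            (C p (δ - j) * C (b' : ℤ) ((m : ℤ) + k - d)) * (C (a : ℤ) k * C (k : ℤ) j) := by
      have per_k : ∀ k ∈ Finset.range (a + 1),
          C a k * C b ((m : ℤ) + k) * C ((p : ℤ) + k) δ * C ((m : ℤ) + k) d
          = ∑ j ∈ Finset.range (a + 1), C (b : ℤ) d *
              ((C p (δ - j) * C (b' : ℤ) ((m : ℤ) + k - d)) * (C (a : ℤ) k * C (k : ℤ) j)) := by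
        intro k hk
        have hT : C (b : ℤ) ((m : ℤ) + k) * C ((m : ℤ) + k) d
            = C (b : ℤ) d * C (b' : ℤ) ((m : ℤ) + k - d) := by
          rw [C_trinomial (b : ℤ) ((m : ℤ) + k) d, hb']
        have hV : C ((p : ℤ) + k) δ = ∑ j ∈ Finset.range (a + 1), C (k : ℤ) j * C p (δ - j) := by
          rw [show (p : ℤ) + k = ((k + p : ℕ) : ℤ) by push_cast; ring,
            ← C_vandermonde' k p a (Finset.mem_range_succ_iff.mp hk) δ]
        calc C a k * C b ((m : ℤ) + k) * C ((p : ℤ) + k) δ * C ((m : ℤ) + k) d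
            = (C (b : ℤ) ((m : ℤ) + k) * C ((m : ℤ) + k) d) * C a k * C ((p : ℤ) + k) δ := by
              ring
          _ = (C (b : ℤ) d * C (b' : ℤ) ((m : ℤ) + k - d)) * C a k *
                ∑ j ∈ Finset.range (a + 1), C (k : ℤ) j * C p (δ - j) := by rw [hT, hV]
          _ = ∑ j ∈ Finset.range (a + 1), C (b : ℤ) d *
                ((C p (δ - j) * C (b' : ℤ) ((m : ℤ) + k - d)) * (C (a : ℤ) k * C (k : ℤ) j)) := by
              simp only [Finset.mul_sum]
              apply Finset.sum_congr rfl
              intro j _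
              ring
      rw [Finset.sum_congr rfl per_k, Finset.sum_comm, Finset.mul_sum]
      apply Finset.sum_congr rfl
      intro j _
      rw [Finset.mul_sum]
    -- Step 2: inner sum over k via trinomial + shifted Vandermonde
    have step2 : ∀ j ∈ Finset.range (a + 1),
        ∑ k ∈ Finset.range (a + 1),
          (C p (δ - j) * C (b' : ℤ) ((m : ℤ) + k - d)) * (C (a : ℤ) k * C (k : ℤ) j)
        = C (a : ℤ) j * (C p (δ - j) * C (δ - j) s) := by
      intro j hj
      have hja : j ≤ a := Finset.mem_range_succ_iff.mp hj
      set u : ℕ := a - j with hu_def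
      have hu : (a : ℤ) - j = (u : ℤ) := by omega
      have hT2 : ∀ k : ℕ, C (a : ℤ) k * C (k : ℤ) j
          = C (a : ℤ) j * C (u : ℤ) ((k : ℤ) - j) := by
        intro k
        rw [C_trinomial (a : ℤ) k j, hu]
      have hsum : ∑ k ∈ Finset.range (a + 1),
          C (u : ℤ) ((k : ℤ) - j) * C (b' : ℤ) (((m : ℤ) - d) + k)
          = C ((u + b' : ℕ)) (((m : ℤ) - d) + j + u) :=
        C_shift u b' j a (by omega) ((m : ℤ) - d)
      have hcast : ((u + b' : ℕ) : ℤ) = δ - j := by rw [hδ]; omega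
      have hlow : ((m : ℤ) - d) + j + u = s := by rw [hs]; omega
      calc ∑ k ∈ Finset.range (a + 1),
            (C p (δ - j) * C (b' : ℤ) ((m : ℤ) + k - d)) * (C (a : ℤ) k * C (k : ℤ) j)
          = (C (a : ℤ) j * C p (δ - j)) * ∑ k ∈ Finset.range (a + 1),
              C (u : ℤ) ((k : ℤ) - j) * C (b' : ℤ) (((m : ℤ) - d) + k) := by
            rw [Finset.mul_sum]
            apply Finset.sum_congr rfl
            intro k _
            rw [hT2 k, show (m : ℤ) + k - d = ((m : ℤ) - d) + k by ring]
            ring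
        _ = C (a : ℤ) j * (C p (δ - j) * C (δ - j) s) := by
            rw [hsum, hcast, hlow]; ring
    -- Step 3: final trinomial + Vandermonde
    have step3 : ∀ j : ℕ, C p (δ - j) * C (δ - j) s = C p s * C ((p : ℤ) - s) ((b : ℤ) - m - j) := by
      intro j
      rw [C_trinomial (p : ℤ) (δ - j) s,
        show δ - j - s = (b : ℤ) - m - j by rw [hδ, hs]; ring]
    rw [step1, Finset.sum_congr rfl step2]
    have step4 : ∑ j ∈ Finset.range (a + 1), C (a : ℤ) j * (C p (δ - j) * C (δ - j) s)
        = C p s * ∑ j ∈ Finset.range (a + 1), C (a : ℤ) j * C ((p : ℤ) - s) ((b : ℤ) - m - j) := by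
      rw [Finset.mul_sum]
      apply Finset.sum_congr rfl
      intro j _
      rw [step3 j]; ring
    rw [step4]
    by_cases hsp : 0 ≤ s ∧ s ≤ (p : ℤ)
    · obtain ⟨hs0, hsp'⟩ := hsp
      have hq : ∃ q : ℕ, (p : ℤ) - s = (q : ℤ) := ⟨((p : ℤ) - s).toNat, by omega⟩
      obtain ⟨q, hq⟩ := hq
      have hvand : ∑ j ∈ Finset.range (a + 1), C (a : ℤ) j * C ((p : ℤ) - s) ((b : ℤ) - m - j)
          = C ((a + q : ℕ)) ((b : ℤ) - m) := by
        rw [← C_vandermonde a q ((b : ℤ) - m)]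
        apply Finset.sum_congr rfl
        intro j _
        rw [hq]
      rw [hvand, show ((a + q : ℕ) : ℤ) = (d : ℤ) + p - m by rw [hs] at hq; omega]
      ring
    · have hps : C (p : ℤ) s = 0 := by
        rcases not_and_or.mp hsp with h | h
        · exact C_neg (by omega)
        · exact C_gt (by omega)
      rw [hps]
      ring
  · -- degenerate case b < d : both sides vanish
    have hb : C (b : ℤ) d = 0 := C_gt (by exact_mod_cast not_le.mp hbd)
    rw [hb, mul_zero]
    apply Finset.sum_eq_zero
    intro k _
    have h2 : C (b : ℤ) ((m : ℤ) + k) * C ((m : ℤ) + k) d = 0 := by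
      rw [C_trinomial, hb, zero_mul]
    calc C a k * C b ((m : ℤ) + k) * C ((p : ℤ) + k) ((a : ℤ) + b - d) * C ((m : ℤ) + k) d
        = C a k * C ((p : ℤ) + k) ((a : ℤ) + b - d) * (C (b : ℤ) ((m : ℤ) + k) * C ((m : ℤ) + k) d) := by
          ring
      _ = 0 := by rw [h2, mul_zero]
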